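/- Let A be an a × a complex matrix in bordered block diagonal form with square diagonal blocks B (size b × b) and C (size c × c) in the upper-left positions, zero blocks between B and C, and an arbitrary border of width d := a − (b + c) ≥ 0 (last d rows and last d columns arbitrary). If det(A) ≠ 0, then b + c − d ≤ rank(B) + rank(C) ≤ b + c. -/

import Mathlib

lemma matrix_rank_add_le {m n' : Type*} [Fintype m] [Fintype n']
    (M N : Matrix m n' ℂ) : (M + N).rank ≤ M.rank + N.rank := by
  classical
  rw [Matrix.rank, Matrix.rank, Matrix.rank, Matrix.mulVecLin_add]
  have hle : LinearMap.range (M.mulVecLin + N.mulVecLin) ≤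
      LinearMap.range M.mulVecLin ⊔ LinearMap.range N.mulVecLin := by
    rintro y ⟨x, rfl⟩
    exact Submodule.add_mem_sup (LinearMap.mem_range_self _ x) (LinearMap.mem_range_self _ x)
  exact (Submodule.finrank_mono hle).trans
    (Submodule.finrank_add_le_finrank_add_finrank _ _)

lemma rank_le_rank_submatrix_rows {m k n' : Type*} [Fintype m] [Fintype k] [Fintype n']
    [DecidableEq m]
    (M : Matrix m n' ℂ) (g : k → m) (hg : Function.Injective g)
    (h : ∀ i, (∀ x, i ≠ g x) → ∀ j, M i j = 0) :
    M.rank ≤ (M.submatrix g id).rank := by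
  have hM : M = (Matrix.of fun i x => if i = g x then (1:ℂ) else 0) * M.submatrix g id := by
    ext i j
    rw [Matrix.mul_apply]
    by_cases hi : ∃ x, i = g x
    · obtain ⟨x, rfl⟩ := hi
      rw [Finset.sum_eq_single x]
      · simp
      · intro y _ hy
        simp [hg.ne (Ne.symm hy)]
      · intro hx; exact absurd (Finset.mem_univ x) hx
    · push_neg at hi
      simp [h i hi j, hi]
  calc M.rank = _ := congrArg _ hM
    _ ≤ _ := Matrix.rank_mul_le_right _ _

lemma rank_le_rank_submatrix_cols {m k n' : Type*} [Fintype m] [Fintype k] [Fintype n']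
    [DecidableEq n']
    (M : Matrix m n' ℂ) (g : k → n') (hg : Function.Injective g)
    (h : ∀ j, (∀ x, j ≠ g x) → ∀ i, M i j = 0) :
    M.rank ≤ (M.submatrix id g).rank := by
  have hM : M = M.submatrix id g * (Matrix.of fun x j => if j = g x then (1:ℂ) else 0) := by
    ext i j
    rw [Matrix.mul_apply]
    by_cases hj : ∃ x, j = g x
    · obtain ⟨x, rfl⟩ := hj
      rw [Finset.sum_eq_single x]
      · simp
      · intro y _ hy
        simp [hg.ne (Ne.symm hy)]
      · intro hx; exact absurd (Finset.mem_univ x) hx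
    · push_neg at hj
      simp [h j hj i, hj]
  calc M.rank = _ := congrArg _ hM
    _ ≤ _ := Matrix.rank_mul_le_left _ _

theorem bbd_rank_bound {b c d : ℕ}
    (A : Matrix (Fin b ⊕ Fin c ⊕ Fin d) (Fin b ⊕ Fin c ⊕ Fin d) ℂ)
    (B : Matrix (Fin b) (Fin b) ℂ) (C : Matrix (Fin c) (Fin c) ℂ)
    (hB : ∀ i j, A (Sum.inl i) (Sum.inl j) = B i j)
    (hC : ∀ i j, A (Sum.inr (Sum.inl i)) (Sum.inr (Sum.inl j)) = C i j)
    (hBC : ∀ i j, A (Sum.inl i) (Sum.inr (Sum.inl j)) = 0)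
    (hCB : ∀ i j, A (Sum.inr (Sum.inl i)) (Sum.inl j) = 0)
    (hdet : A.det ≠ 0) :
    b + c ≤ B.rank + C.rank + d ∧ B.rank + C.rank ≤ b + c := by
  classical
  -- the three pieces
  let M₀ : Matrix (Fin b ⊕ Fin c ⊕ Fin d) (Fin b ⊕ Fin c ⊕ Fin d) ℂ := fun i j =>
    match i, j with
    | .inl x, .inl y => B x y
    | .inr (.inl x), .inr (.inl y) => C x y
    | _, _ => 0
  let R : Matrix (Fin b ⊕ Fin c ⊕ Fin d) (Fin b ⊕ Fin c ⊕ Fin d) ℂ := fun i j =>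
    match i with
    | .inr (.inr _) => A i j
    | _ => 0
  let S : Matrix (Fin b ⊕ Fin c ⊕ Fin d) (Fin b ⊕ Fin c ⊕ Fin d) ℂ := A - M₀ - R
  have hA : A = M₀ + R + S := by simp only [S]; abel
  -- embedding of the block-diagonal part
  let emb : Fin b ⊕ Fin c → (Fin b ⊕ Fin c ⊕ Fin d) := Sum.map id Sum.inl
  have hemb : Function.Injective emb := by
    intro x y h
    cases x <;> cases y <;>
      simp only [emb, Sum.map, Sum.elim_inl, Sum.elim_inr, Function.comp_apply, id_eq,
        Sum.inl.injEq, Sum.inr.injEq, reduceCtorEq] at h <;> simp [h]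
  have hbrd : Function.Injective (fun k : Fin d => (Sum.inr (Sum.inr k) : (Fin b ⊕ Fin c ⊕ Fin d))) := by
    intro x y h; simpa using h
  -- rank of R
  have hR : R.rank ≤ d := by
    refine (rank_le_rank_submatrix_rows R _ hbrd ?_).trans
      ((Matrix.rank_le_card_height _).trans (by simp))
    intro i hi j
    cases i with
    | inl x => rfl
    | inr i =>
      cases i with
      | inl x => rfl
      | inr k => exact absurd rfl (hi k)
  -- rank of S
  have hS : S.rank ≤ d := by
    refine (rank_le_rank_submatrix_cols S _ hbrd ?_).trans
      ((Matrix.rank_le_card_width _).trans (by simp))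
    intro j hj i
    have hSij : S i j = A i j - M₀ i j - R i j := rfl
    cases i with
    | inl x =>
      cases j with
      | inl y => simp [hSij, M₀, R, hB]
      | inr j =>
        cases j with
        | inl y => simp [hSij, M₀, R, hBC]
        | inr k => exact absurd rfl (hj k)
    | inr i =>
      cases i with
      | inl x =>
        cases j with
        | inl y => simp [hSij, M₀, R, hCB]
        | inr j =>
          cases j with
          | inl y => simp [hSij, M₀, R, hC]
          | inr k => exact absurd rfl (hj k)
      | inr k =>
        cases j with
        | inl y => simp [hSij, M₀, R]
        | inr j =>
          cases j with
          | inl y => simp [hSij, M₀, R]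
          | inr k' => exact absurd rfl (hj k')
  -- rank of M₀
  have hM1 : M₀.rank ≤ (M₀.submatrix emb id).rank := by
    refine rank_le_rank_submatrix_rows M₀ emb hemb ?_
    intro i hi j
    cases i with
    | inl x => exact absurd rfl (hi (Sum.inl x))
    | inr i =>
      cases i with
      | inl x => exact absurd rfl (hi (Sum.inr x))
      | inr k => cases j with
        | inl y => rfl
        | inr j => cases j <;> rfl
  have hM2 : (M₀.submatrix emb id).rank ≤ (M₀.submatrix emb emb).rank := by
    refine (rank_le_rank_submatrix_cols _ emb hemb ?_)
    intro j hj i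
    cases j with
    | inl y => exact absurd rfl (hj (Sum.inl y))
    | inr j =>
      cases j with
      | inl y => exact absurd rfl (hj (Sum.inr y))
      | inr k => cases i <;> rfl
  -- the diagonal block matrix splits
  let D₁ : Matrix (Fin b ⊕ Fin c) (Fin b ⊕ Fin c) ℂ := fun x y =>
    match x, y with
    | .inl x, .inl y => B x y
    | _, _ => 0
  let D₂ : Matrix (Fin b ⊕ Fin c) (Fin b ⊕ Fin c) ℂ := fun x y =>
    match x, y with
    | .inr x, .inr y => C x y
    | _, _ => 0
  have hsplit : M₀.submatrix emb emb = D₁ + D₂ := by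
    ext x y
    change M₀ (emb x) (emb y) = D₁ x y + D₂ x y
    cases x <;> cases y <;> simp [M₀, D₁, D₂, emb, Matrix.add_apply]
  have hD₁ : D₁.rank ≤ B.rank := by
    have h1 : D₁.rank ≤ (D₁.submatrix Sum.inl id).rank := by
      refine rank_le_rank_submatrix_rows D₁ Sum.inl Sum.inl_injective ?_
      intro i hi j
      cases i with
      | inl x => exact absurd rfl (hi x)
      | inr x => cases j <;> rfl
    have h2 : (D₁.submatrix Sum.inl id).rank ≤ (D₁.submatrix Sum.inl Sum.inl).rank := by
      refine rank_le_rank_submatrix_cols _ Sum.inl Sum.inl_injective ?_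
      intro j hj i
      cases j with
      | inl y => exact absurd rfl (hj y)
      | inr y => rfl
    have h3 : D₁.submatrix Sum.inl Sum.inl = B := by ext x y; rfl
    calc D₁.rank ≤ _ := h1
      _ ≤ _ := h2
      _ = B.rank := by rw [h3]
  have hD₂ : D₂.rank ≤ C.rank := by
    have h1 : D₂.rank ≤ (D₂.submatrix Sum.inr id).rank := by
      refine rank_le_rank_submatrix_rows D₂ Sum.inr Sum.inr_injective ?_
      intro i hi j
      cases i with
      | inl x => cases j <;> rfl
      | inr x => exact absurd rfl (hi x)
    have h2 : (D₂.submatrix Sum.inr id).rank ≤ (D₂.submatrix Sum.inr Sum.inr).rank := by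
      refine rank_le_rank_submatrix_cols _ Sum.inr Sum.inr_injective ?_
      intro j hj i
      cases j with
      | inl y => rfl
      | inr y => exact absurd rfl (hj y)
    have h3 : D₂.submatrix Sum.inr Sum.inr = C := by ext x y; rfl
    calc D₂.rank ≤ _ := h1
      _ ≤ _ := h2
      _ = C.rank := by rw [h3]
  have hM₀ : M₀.rank ≤ B.rank + C.rank := by
    calc M₀.rank ≤ (M₀.submatrix emb emb).rank := hM1.trans hM2
      _ = (D₁ + D₂).rank := by rw [hsplit]
      _ ≤ D₁.rank + D₂.rank := matrix_rank_add_le _ _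
      _ ≤ B.rank + C.rank := Nat.add_le_add hD₁ hD₂
  -- rank of A
  have hrA : A.rank = b + (c + d) := by
    rw [Matrix.rank_of_isUnit A ((Matrix.isUnit_iff_isUnit_det A).mpr hdet.isUnit)]
    simp
  have hchain : A.rank ≤ B.rank + C.rank + d + d := by
    calc A.rank = (M₀ + R + S).rank := by rw [← hA]
      _ ≤ (M₀ + R).rank + S.rank := matrix_rank_add_le _ _
      _ ≤ M₀.rank + R.rank + S.rank := Nat.add_le_add_right (matrix_rank_add_le _ _) _
      _ ≤ B.rank + C.rank + d + d := by
          exact Nat.add_le_add (Nat.add_le_add hM₀ hR) hS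
  have hBb : B.rank ≤ b := Matrix.rank_le_width B
  have hCc : C.rank ≤ c := Matrix.rank_le_width C
  constructor
  · omega
  · omega
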